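/- arXiv:1810.12036 — 3 statements merged into one kernel-verified Lean document; each statement's English description precedes it below -/
import Mathlib

section
/- There exist dimensional constants k_d, K_d > 0 such that for all s ∈ (0,1] and all x, y ∈ 𝕋^d, k_d (2πs)^{−d/2} exp(−dist(x,y)²/(2s)) ≤ τ_s(y−x) ≤ K_d (2πs)^{−d/2} exp(−dist(x,y)²/(2s)). -/
open MeasureTheory Real

noncomputable section

instance : Fact ((0:ℝ) < 1) := ⟨one_pos⟩

/-- The flat torus `𝕋^d = (ℝ/ℤ)^d`. -/
abbrev Torus (d : ℕ) := Fin d → AddCircle (1:ℝ)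

/-- The canonical lift of a point of `ℝ/ℤ` to `[0,1)`. -/
def liftT (x : AddCircle (1:ℝ)) : ℝ := (AddCircle.equivIco 1 0 x).1

/-- The heat kernel `τ_s` on the torus at time `s`, as a periodized Gaussian. -/
def heatKernel (d : ℕ) (s : ℝ) (z : Torus d) : ℝ :=
  (2 * π * s) ^ (-(d:ℝ)/2) *
    ∑' l : Fin d → ℤ, Real.exp (-(∑ i, (liftT (z i) + (l i : ℝ))^2) / (2*s))

/-- The squared geodesic distance on the torus. -/
def distSq {d : ℕ} (x y : Torus d) : ℝ := ∑ i, (dist (x i) (y i))^2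

namespace HKAux

/-- The comparison weight. -/
def g (n : ℤ) : ℝ := Real.exp (-(((n.natAbs : ℝ))^2 - (n.natAbs : ℝ)) / 2)

lemma g_nonneg (n : ℤ) : 0 ≤ g n := (Real.exp_pos _).le

lemma g_le (n : ℤ) : g n ≤ Real.exp 1 * (Real.exp (-1)) ^ n.natAbs := by
  rw [← Real.exp_nat_mul, ← Real.exp_add, g]
  apply Real.exp_le_exp.2
  rcases le_or_gt (n.natAbs : ℝ) 1 with h | h
  · have h0 : (0:ℝ) ≤ (n.natAbs : ℝ) := Nat.cast_nonneg _
    nlinarith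
  · have h2 : (2:ℝ) ≤ (n.natAbs : ℝ) := by
      have : (1:ℕ) < n.natAbs := by exact_mod_cast h
      exact_mod_cast this
    nlinarith

lemma g_summable : Summable g := by
  apply Summable.of_nonneg_of_le g_nonneg g_le
  have hr : Summable (fun k : ℕ => Real.exp 1 * (Real.exp (-1)) ^ k) :=
    (summable_geometric_of_lt_one (Real.exp_pos _).le
      (Real.exp_lt_one_iff.2 (by norm_num))).mul_left _
  apply Summable.of_nat_of_neg
  · simpa using hr
  · simpa using hr

/-- `∑ g`. -/
def G : ℝ := ∑' n, g n

lemma one_le_G : 1 ≤ G := by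
  have := g_summable.le_tsum 0 (fun n _ => g_nonneg n)
  simpa [g, G] using this

set_option maxHeartbeats 1000000 in
lemma hasSum_pi (d : ℕ) (m : Fin d → ℤ) :
    HasSum (fun l : Fin d → ℤ => ∏ i, g (l i - m i)) (G ^ d) := by
  induction d with
  | zero =>
    have : HasSum (fun l : Fin 0 → ℤ => ∏ i, g (l i - m i))
        ((fun l : Fin 0 → ℤ => ∏ i, g (l i - m i)) default) := by
      apply hasSum_single
      intro b hb
      exact absurd (Subsingleton.elim b default) hb
    simpa using this
  | succ d ih =>
    set e : ℤ × (Fin d → ℤ) ≃ (Fin (d+1) → ℤ) := Fin.consEquiv (fun _ : Fin (d+1) => ℤ) with he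
    have hg1 : HasSum (fun a : ℤ => g (a - m 0)) G := by
      have := (Equiv.subRight (m 0)).hasSum_iff.2 g_summable.hasSum
      simpa [G, Function.comp_def] using this
    have key : HasSum (fun p : ℤ × (Fin d → ℤ) =>
        g (p.1 - m 0) * ∏ i, g (p.2 i - m i.succ)) (G * G ^ d) := by
      apply HasSum.mul hg1 (ih (fun i => m i.succ))
      apply Summable.mul_of_nonneg hg1.summable (ih (fun i => m i.succ)).summable
      · exact fun _ => g_nonneg _
      · exact fun _ => Finset.prod_nonneg (fun _ _ => g_nonneg _)
    have heq : ((fun l : Fin (d+1) → ℤ => ∏ i, g (l i - m i)) ∘ e) =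
        (fun p : ℤ × (Fin d → ℤ) =>
          g (p.1 - m 0) * ∏ i, g (p.2 i - m i.succ)) := by
      funext p
      simp only [Function.comp_apply]
      rw [show e p = Fin.cons p.1 p.2 from rfl, Fin.prod_univ_succ]
      simp
    have key2 : HasSum ((fun l : Fin (d+1) → ℤ => ∏ i, g (l i - m i)) ∘ e)
        (G ^ (d+1)) := by
      rw [heq, pow_succ, mul_comm]
      exact key
    exact e.hasSum_iff.mp key2

end HKAux

set_option maxHeartbeats 1000000 in
/-- Gaussian bounds for the heat kernel on the torus: there are dimensional constants
`k_d, K_d > 0` such that for all `s ∈ (0,1]` and all `x, y ∈ 𝕋^d`,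
`k_d (2πs)^{−d/2} exp(−dist(x,y)²/(2s)) ≤ τ_s(y−x) ≤ K_d (2πs)^{−d/2} exp(−dist(x,y)²/(2s))`. -/
theorem heatKernel_gaussian_bounds (d : ℕ) :
    ∃ k K : ℝ, 0 < k ∧ 0 < K ∧
      ∀ s ∈ Set.Ioc (0:ℝ) 1, ∀ x y : Torus d,
        k * (2 * π * s) ^ (-(d:ℝ)/2) * Real.exp (-(distSq x y) / (2*s)) ≤
            heatKernel d s (y - x) ∧
          heatKernel d s (y - x) ≤
            K * (2 * π * s) ^ (-(d:ℝ)/2) * Real.exp (-(distSq x y) / (2*s)) := by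
  classical
  refine ⟨1, HKAux.G ^ d, one_pos, pow_pos (lt_of_lt_of_le one_pos HKAux.one_le_G) d, ?_⟩
  rintro s ⟨hs0, hs1⟩ x y
  set z : Torus d := y - x with hz
  set t : Fin d → ℝ := fun i => liftT (z i) with ht
  set m : Fin d → ℤ := fun i => -(round (t i)) with hm
  -- basic facts about the distance
  have hdist : ∀ i, dist (x i) (y i) = |t i + (m i : ℝ)| := by
    intro i
    have hco : ((t i : ℝ) : AddCircle (1:ℝ)) = z i :=
      (AddCircle.equivIco 1 0).symm_apply_apply (z i)
    have h1 : dist (x i) (y i) = ‖z i‖ := by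
      rw [dist_eq_norm]
      have : x i - y i = -(z i) := by simp [hz]
      rw [this, norm_neg]
    rw [h1, ← hco, AddCircle.norm_eq]
    simp [hm, sub_eq_add_neg]
  have hdist_le : ∀ i, |t i + (m i : ℝ)| ≤ 1/2 := by
    intro i
    have := abs_sub_round (t i)
    simpa [hm, sub_eq_add_neg] using this
  -- key pointwise inequality
  have hkey : ∀ i, ∀ l : ℤ,
      (dist (x i) (y i))^2 + ((((l - m i).natAbs : ℝ))^2 - ((l - m i).natAbs : ℝ))
        ≤ (t i + (l : ℝ))^2 := by
    intro i l
    rw [hdist i]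
    set δ : ℝ := |t i + (m i : ℝ)| with hδ
    have hδ0 : 0 ≤ δ := abs_nonneg _
    have hδh : δ ≤ 1/2 := hdist_le i
    have hn : (((l - m i).natAbs : ℝ)) = |(l : ℝ) - (m i : ℝ)| := by
      rw [Nat.cast_natAbs]; push_cast; ring_nf
    rcases eq_or_ne l (m i) with rfl | hne
    · simp only [sub_self, Int.natAbs_zero, Nat.cast_zero, ne_eq, OfNat.ofNat_ne_zero,
        not_false_eq_true, zero_pow, sub_zero, add_zero, hδ, sq_abs]
      simp [sq_abs]
    · have hn1 : (1:ℝ) ≤ ((l - m i).natAbs : ℝ) := by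
        have : 1 ≤ (l - m i).natAbs := by
          have : l - m i ≠ 0 := sub_ne_zero.2 hne
          omega
        exact_mod_cast this
      set n : ℝ := ((l - m i).natAbs : ℝ) with hnn
      have htri : n - δ ≤ |t i + (l : ℝ)| := by
        rw [hn, hδ]
        have : |(l:ℝ) - (m i : ℝ)| - |t i + (m i : ℝ)| ≤ |t i + (l : ℝ)| := by
          have h := abs_sub_abs_le_abs_sub ((l:ℝ) - m i) (-(t i + (m i : ℝ)))
          rw [abs_neg] at h
          have h2 : (l:ℝ) - m i - -(t i + (m i : ℝ)) = t i + l := by ring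
          rw [h2] at h
          linarith
        linarith
      have habs : (t i + (l:ℝ))^2 = |t i + (l:ℝ)|^2 := (sq_abs _).symm
      have hge0 : 0 ≤ n - δ := by linarith
      nlinarith [abs_nonneg (t i + (l:ℝ))]
  -- the summands
  set F : (Fin d → ℤ) → ℝ :=
    fun l => Real.exp (-(∑ i, (t i + (l i : ℝ))^2) / (2*s)) with hF
  set P : (Fin d → ℤ) → ℝ := fun l => ∏ i, HKAux.g (l i - m i) with hP
  set c : ℝ := Real.exp (-(distSq x y) / (2*s)) with hc
  have hc0 : 0 < c := Real.exp_pos _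
  have hPsum : HasSum P (HKAux.G ^ d) := HKAux.hasSum_pi d m
  -- termwise bound  F l ≤ c * P l
  have hterm : ∀ l, F l ≤ c * P l := by
    intro l
    have hB0 : ∀ i ∈ Finset.univ, (0:ℝ) ≤
        (((l i - m i).natAbs : ℝ))^2 - ((l i - m i).natAbs : ℝ) := by
      intro i _
      have h := Nat.cast_nonneg (α := ℝ) ((l i - m i).natAbs)
      rcases le_or_gt (((l i - m i).natAbs : ℝ)) 1 with h1 | h1
      · rcases Nat.le_one_iff_eq_zero_or_eq_one.1
          (by exact_mod_cast h1 : (l i - m i).natAbs ≤ 1) with h2 | h2 <;> simp [h2]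
      · nlinarith
    set B : ℝ := ∑ i, ((((l i - m i).natAbs : ℝ))^2 - ((l i - m i).natAbs : ℝ)) with hB
    have hBnn : 0 ≤ B := Finset.sum_nonneg hB0
    have hsum_ge : distSq x y + B ≤ ∑ i, (t i + (l i : ℝ))^2 := by
      rw [distSq, hB, ← Finset.sum_add_distrib]
      exact Finset.sum_le_sum (fun i _ => hkey i (l i))
    have h2s : (0:ℝ) < 2*s := by linarith
    have e1 : -(∑ i, (t i + (l i : ℝ))^2) / (2*s) ≤ (-(distSq x y) - B)/(2*s) := by
      apply div_le_div_of_nonneg_right _ h2s.le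
      linarith
    have e3 : -B/(2*s) ≤ -B/2 := by
      rw [div_le_div_iff₀ h2s (by norm_num : (0:ℝ) < 2)]
      nlinarith
    have hexp : -(∑ i, (t i + (l i : ℝ))^2) / (2*s) ≤ -(distSq x y)/(2*s) + (-B/2) := by
      have e2 : (-(distSq x y) - B)/(2*s) = -(distSq x y)/(2*s) + (-B)/(2*s) := by ring
      rw [e2] at e1
      linarith
    have hPeq : Real.exp (-B/2) = P l := by
      have h1 : P l = Real.exp (∑ i,
          (-(((((l i - m i).natAbs : ℝ))^2 - (((l i - m i).natAbs : ℝ)))) / 2)) := by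
        rw [Real.exp_sum, hP]
        rfl
      rw [h1, hB]
      congr 1
      rw [← Finset.sum_neg_distrib, Finset.sum_div]
    calc F l ≤ Real.exp (-(distSq x y)/(2*s) + (-B/2)) := Real.exp_le_exp.2 hexp
      _ = c * Real.exp (-B/2) := by rw [Real.exp_add, hc]
      _ = c * P l := by rw [hPeq]
  -- summability
  have hFnn : ∀ l, 0 ≤ F l := fun l => (Real.exp_pos _).le
  have hcP : Summable (fun l => c * P l) := hPsum.summable.mul_left c
  have hFsum : Summable F := Summable.of_nonneg_of_le hFnn hterm hcP
  have hFm : F m = c := by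
    have hsum : ∑ i, (t i + (m i : ℝ))^2 = distSq x y := by
      rw [distSq]
      exact Finset.sum_congr rfl (fun i _ => by rw [hdist i, sq_abs])
    show Real.exp (-(∑ i, (t i + (m i : ℝ))^2) / (2*s)) = c
    rw [hsum, hc]
  have hlow : c ≤ ∑' l, F l := hFm ▸ hFsum.le_tsum m (fun _ _ => hFnn _)
  have hup : (∑' l, F l) ≤ c * HKAux.G ^ d := by
    calc (∑' l, F l) ≤ ∑' l, c * P l := Summable.tsum_le_tsum hterm hFsum hcP
      _ = c * ∑' l, P l := tsum_mul_left
      _ = c * HKAux.G ^ d := by rw [hPsum.tsum_eq]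
  have hHK : heatKernel d s z = (2*π*s) ^ (-(d:ℝ)/2) * ∑' l, F l := rfl
  have hpos : 0 < (2*π*s) ^ (-(d:ℝ)/2) :=
    Real.rpow_pos_of_pos (by positivity) _
  constructor
  · rw [hHK, one_mul]
    exact mul_le_mul_of_nonneg_left hlow hpos.le
  · rw [hHK]
    calc (2*π*s) ^ (-(d:ℝ)/2) * ∑' l, F l
        ≤ (2*π*s) ^ (-(d:ℝ)/2) * (c * HKAux.G ^ d) :=
          mul_le_mul_of_nonneg_left hup hpos.le
      _ = HKAux.G ^ d * (2*π*s) ^ (-(d:ℝ)/2) * Real.exp (-(distSq x y) / (2*s)) := by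
          rw [hc]; ring

end
end

section
/- Let γ ∈ 𝒫(𝕋^d × 𝕋^d) have finite relative entropy H(γ | Leb⊗Leb) < ∞. Then ν·H(γ | R^ν_{0,1}) → (1/2)∫ dist(x,y)² dγ(x,y) as ν → 0, where R^ν_{0,1} has density τ_ν(y−x) with respect to Leb⊗Leb on 𝕋^d × 𝕋^d. -/
open MeasureTheory Real Filter

noncomputable section

/-- Relative entropy (Kullback–Leibler divergence) `H(p|r) = ∫ log (dp/dr) dp`. -/
def relEnt {X : Type*} [MeasurableSpace X] (p r : Measure X) : ℝ :=
  ∫ x, Real.log ((p.rnDeriv r x).toReal) ∂p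

/-- The joint law at times `0,1` of the reversible Brownian motion with diffusivity `ν`
on the torus: the measure with density `τ_ν(y−x)` with respect to `Leb ⊗ Leb`. -/
def Rnu01 (d : ℕ) (ν : ℝ) : Measure (Torus d × Torus d) :=
  (volume : Measure (Torus d × Torus d)).withDensity
    (fun p => ENNReal.ofReal (heatKernel d ν (p.2 - p.1)))

/-! ### Auxiliary lemmas -/

lemma liftT_mem (x : AddCircle (1:ℝ)) : liftT x ∈ Set.Ico (0:ℝ) 1 := by
  have := (AddCircle.equivIco 1 0 x).2
  simpa [liftT] using this

lemma liftT_coe (x : AddCircle (1:ℝ)) : ((liftT x : ℝ) : AddCircle (1:ℝ)) = x :=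
  (AddCircle.equivIco 1 0).symm_apply_apply x

lemma measurable_liftT : Measurable liftT :=
  measurable_subtype_coe.comp (AddCircle.measurableEquivIco (T := 1) 0).measurable

lemma norm_sq_eq (x : AddCircle (1:ℝ)) :
    ‖x‖^2 = min ((liftT x)^2) ((liftT x - 1)^2) := by
  obtain ⟨h0, h1⟩ := liftT_mem x
  set v := liftT x with hv
  have hn : ‖x‖ = |v - round v| := by
    conv_lhs => rw [← liftT_coe x]
    rw [AddCircle.norm_eq]; norm_num; rfl
  rcases lt_or_ge v (1/2) with h | h
  · have hr : round v = 0 := by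
      rw [round_eq, Int.floor_eq_zero_iff]
      constructor
      · linarith
      · simpa using by linarith
    rw [hn, hr, min_eq_left (by nlinarith)]
    rw [abs_of_nonneg (by push_cast; linarith)]
    push_cast; ring
  · have hr : round v = 1 := by
      rw [round_eq, Int.floor_eq_iff]
      push_cast
      constructor <;> linarith
    rw [hn, hr, min_eq_right (by nlinarith)]
    rw [abs_of_nonpos (by push_cast; linarith)]
    push_cast; ring

/-- A penalty function on `ℤ` measuring the distance of `l` to `{0, -1}`. -/
def Mz (l : ℤ) : ℝ := max (l:ℝ) (max (-(l:ℝ)-1) 0)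

lemma Mz_nonneg (l : ℤ) : 0 ≤ Mz l := le_max_of_le_right (le_max_right _ _)

lemma Mz_cases (l : ℤ) :
    ((1:ℝ) ≤ l ∧ Mz l = l) ∨ (Mz l = 0 ∧ (l = 0 ∨ l = -1)) ∨
      ((l:ℝ) ≤ -2 ∧ Mz l = -(l:ℝ)-1) := by
  have h : (1:ℤ) ≤ l ∨ l = 0 ∨ l = -1 ∨ l ≤ -2 := by omega
  rcases h with h | h | h | h
  · left
    have h' : (1:ℝ) ≤ (l:ℝ) := by exact_mod_cast h
    refine ⟨h', ?_⟩
    rw [Mz, show max (-(l:ℝ)-1) 0 = 0 from max_eq_right (by linarith),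
      max_eq_left (by linarith)]
  · right; left; subst h; constructor
    · norm_num [Mz]
    · left; rfl
  · right; left; subst h; constructor
    · norm_num [Mz]
    · right; rfl
  · right; right
    have h' : (l:ℝ) ≤ -2 := by exact_mod_cast h
    refine ⟨h', ?_⟩
    rw [Mz, show max (-(l:ℝ)-1) 0 = -(l:ℝ)-1 from max_eq_left (by linarith),
      max_eq_right (by linarith)]

lemma min_sq_le_quarter {v : ℝ} (h0 : 0 ≤ v) (h1 : v < 1) :
    min (v^2) ((v-1)^2) ≤ 1/4 := by
  rcases le_or_gt v (1/2) with h | h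
  · exact min_le_of_left_le (by nlinarith)
  · exact min_le_of_right_le (by nlinarith)

lemma key_ineq {v : ℝ} (h0 : 0 ≤ v) (h1 : v < 1) (l : ℤ) :
    min (v^2) ((v-1)^2) + (3/4) * (Mz l)^2 ≤ (v + l)^2 := by
  have hq := min_sq_le_quarter h0 h1
  rcases Mz_cases l with ⟨hl, hM⟩ | ⟨hM, hl⟩ | ⟨hl, hM⟩
  · rw [hM]; nlinarith
  · rw [hM]
    rcases hl with rfl | rfl
    · simpa using min_le_left (v^2) ((v-1)^2)
    · push_cast
      calc min (v^2) ((v-1)^2) + 3/4 * 0^2 = min (v^2) ((v-1)^2) := by ring_nf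
        _ ≤ (v-1)^2 := min_le_right _ _
        _ = (v + (-1))^2 := by ring
  · rw [hM]; nlinarith

lemma Mz_sq_ge (l : ℤ) : (|l| : ℝ) - 1 ≤ (Mz l)^2 := by
  rcases Mz_cases l with ⟨hl, hM⟩ | ⟨hM, hl⟩ | ⟨hl, hM⟩
  · rw [hM, abs_of_nonneg (by linarith : (0:ℝ) ≤ (l:ℝ))]
    nlinarith
  · rcases hl with rfl | rfl <;> simp [hM]
  · rw [hM, abs_of_nonpos (by linarith : (l:ℝ) ≤ 0)]
    nlinarith

lemma summable_exp_nat : Summable (fun n : ℕ => Real.exp (-(n:ℝ))) := by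
  refine (summable_geometric_of_lt_one (Real.exp_pos (-1)).le
    (Real.exp_lt_one_iff.mpr (by norm_num))).congr fun n => ?_
  rw [← Real.exp_nat_mul]
  ring_nf

lemma summable_exp_abs : Summable (fun l : ℤ => Real.exp (1 - |(l:ℝ)|)) := by
  have h : Summable (fun l : ℤ => Real.exp (-|(l:ℝ)|)) := by
    apply Summable.of_nat_of_neg
    · exact summable_exp_nat.congr fun n => by norm_num
    · exact summable_exp_nat.congr fun n => by norm_num
  have := h.mul_left (Real.exp 1)
  refine this.congr fun l => ?_
  rw [← Real.exp_add]
  ring_nf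

lemma summable_pi_prod (d : ℕ) {f : ℤ → ℝ} (hf0 : ∀ l, 0 ≤ f l) (hf : Summable f) :
    Summable (fun l : Fin d → ℤ => ∏ i, f (l i)) := by
  induction d with
  | zero => exact summable_of_finite_support (Set.toFinite _)
  | succ n ih =>
    have h2 : Summable (fun q : ℤ × (Fin n → ℤ) => f q.1 * ∏ i, f (q.2 i)) := by
      apply Summable.mul_of_nonneg hf ih hf0
      intro b
      exact Finset.prod_nonneg fun i _ => hf0 _
    have key : ∀ q : ℤ × (Fin n → ℤ),
        f q.1 * ∏ i, f (q.2 i)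
          = ∏ i : Fin (n+1), f (Fin.cons (α := fun _ => ℤ) q.1 q.2 i) := by
      intro q
      rw [Fin.prod_univ_succ]
      simp
    have h3 : Summable ((fun l : Fin (n+1) → ℤ => ∏ i, f (l i)) ∘
        (Fin.consEquiv (fun _ : Fin (n+1) => ℤ))) := h2.congr fun q => key q
    exact (Equiv.summable_iff _).mp h3

/-- The constant `C_d` controlling the periodized Gaussian sums. -/
def Cd (d : ℕ) : ℝ := ∑' l : Fin d → ℤ, ∏ i, Real.exp (1 - |(l i : ℝ)|)

lemma summable_Cd (d : ℕ) :
    Summable (fun l : Fin d → ℤ => ∏ i, Real.exp (1 - |(l i : ℝ)|)) :=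
  summable_pi_prod d (f := fun l : ℤ => Real.exp (1 - |(l:ℝ)|))
    (fun l => (Real.exp_pos _).le) summable_exp_abs

lemma one_le_Cd (d : ℕ) : 1 ≤ Cd d := by
  have h0 : (1:ℝ) ≤ ∏ i : Fin d, Real.exp (1 - |((0 : Fin d → ℤ) i : ℝ)|) := by
    rw [← Real.exp_sum, show (1:ℝ) = Real.exp 0 from Real.exp_zero.symm]
    apply Real.exp_le_exp.mpr
    apply Finset.sum_nonneg
    intro i _
    simp
  exact h0.trans (Summable.le_tsum (summable_Cd d) 0
    fun l _ => Finset.prod_nonneg fun i _ => (Real.exp_pos _).le)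

lemma log_Cd_nonneg (d : ℕ) : 0 ≤ Real.log (Cd d) := Real.log_nonneg (one_le_Cd d)

/-- The squared distance of `z` to `0`, coordinatewise. -/
def Dz (d : ℕ) (z : Torus d) : ℝ := ∑ i, min ((liftT (z i))^2) ((liftT (z i) - 1)^2)

lemma Dz_nonneg (d : ℕ) (z : Torus d) : 0 ≤ Dz d z :=
  Finset.sum_nonneg fun i _ => le_min (sq_nonneg _) (sq_nonneg _)

lemma Dz_le (d : ℕ) (z : Torus d) : Dz d z ≤ d := by
  rw [Dz]
  calc ∑ i, min ((liftT (z i))^2) ((liftT (z i) - 1)^2)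
      ≤ ∑ _i : Fin d, (1:ℝ) := by
        apply Finset.sum_le_sum
        intro i _
        obtain ⟨h0, h1⟩ := liftT_mem (z i)
        exact min_le_of_left_le (by nlinarith)
    _ = d := by simp

lemma Dz_eq_sum_norm (d : ℕ) (z : Torus d) : Dz d z = ∑ i, ‖z i‖^2 := by
  rw [Dz]
  exact (Finset.sum_congr rfl fun i _ => (norm_sq_eq (z i))).symm

lemma term_le {d : ℕ} {ν : ℝ} (hν : 0 < ν) (hν' : ν ≤ 3/8) (z : Torus d) (l : Fin d → ℤ) :
    Real.exp (-(∑ i, (liftT (z i) + (l i : ℝ))^2) / (2*ν))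
      ≤ Real.exp (-(Dz d z)/(2*ν)) * ∏ i, Real.exp (1 - |(l i : ℝ)|) := by
  have h2ν : 0 < 2*ν := by linarith
  set s := ∑ i, (Mz (l i))^2 with hs
  have hs0 : 0 ≤ s := Finset.sum_nonneg fun i _ => sq_nonneg _
  have hsum_ge : Dz d z + (3/4) * s ≤ ∑ i, (liftT (z i) + (l i : ℝ))^2 := by
    have := Finset.sum_le_sum (fun i (_ : i ∈ Finset.univ) =>
      key_ineq (liftT_mem (z i)).1 (liftT_mem (z i)).2 (l i))
    rw [Finset.sum_add_distrib, ← Finset.mul_sum] at this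
    exact this
  have h1 : Real.exp (-(∑ i, (liftT (z i) + (l i : ℝ))^2) / (2*ν))
      ≤ Real.exp (-(Dz d z + (3/4) * s)/(2*ν)) :=
    Real.exp_le_exp.mpr ((div_le_div_iff_of_pos_right h2ν).mpr (by linarith))
  have h2 : Real.exp (-(Dz d z + (3/4)*s)/(2*ν))
      = Real.exp (-(Dz d z)/(2*ν)) * Real.exp (-((3/4)*s/(2*ν))) := by
    rw [← Real.exp_add]
    ring_nf
  have h3 : Real.exp (-((3/4)*s/(2*ν))) ≤ ∏ i, Real.exp (1 - |(l i : ℝ)|) := by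
    rw [← Real.exp_sum]
    apply Real.exp_le_exp.mpr
    have hss : s ≤ (3/4)*s/(2*ν) := by
      rw [le_div_iff₀ h2ν]; nlinarith
    have h4 : ∑ i, (|(l i:ℝ)| - 1) ≤ s := Finset.sum_le_sum fun i _ => Mz_sq_ge (l i)
    have h5 : ∑ i, ((1:ℝ) - |(l i:ℝ)|) = -(∑ i, (|(l i:ℝ)| - 1)) := by
      rw [← Finset.sum_neg_distrib]
      exact Finset.sum_congr rfl fun i _ => by ring
    rw [h5]
    linarith
  calc Real.exp (-(∑ i, (liftT (z i) + (l i : ℝ))^2) / (2*ν))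
      ≤ Real.exp (-(Dz d z + (3/4) * s)/(2*ν)) := h1
    _ = Real.exp (-(Dz d z)/(2*ν)) * Real.exp (-((3/4)*s/(2*ν))) := h2
    _ ≤ Real.exp (-(Dz d z)/(2*ν)) * ∏ i, Real.exp (1 - |(l i : ℝ)|) :=
        mul_le_mul_of_nonneg_left h3 (Real.exp_pos _).le

lemma summable_term {d : ℕ} {ν : ℝ} (hν : 0 < ν) (hν' : ν ≤ 3/8) (z : Torus d) :
    Summable (fun l : Fin d → ℤ =>
      Real.exp (-(∑ i, (liftT (z i) + (l i : ℝ))^2) / (2*ν))) :=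
  Summable.of_nonneg_of_le (fun l => (Real.exp_pos _).le) (term_le hν hν' z)
    ((summable_Cd d).mul_left _)

lemma tsum_upper {d : ℕ} {ν : ℝ} (hν : 0 < ν) (hν' : ν ≤ 3/8) (z : Torus d) :
    (∑' l : Fin d → ℤ, Real.exp (-(∑ i, (liftT (z i) + (l i : ℝ))^2) / (2*ν)))
      ≤ Real.exp (-(Dz d z)/(2*ν)) * Cd d := by
  have := Summable.tsum_le_tsum (term_le hν hν' z) (summable_term hν hν' z)
    ((summable_Cd d).mul_left _)
  rwa [tsum_mul_left] at this

lemma tsum_lower {d : ℕ} {ν : ℝ} (hν : 0 < ν) (hν' : ν ≤ 3/8) (z : Torus d) :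
    Real.exp (-(Dz d z)/(2*ν))
      ≤ ∑' l : Fin d → ℤ, Real.exp (-(∑ i, (liftT (z i) + (l i : ℝ))^2) / (2*ν)) := by
  set l0 : Fin d → ℤ := fun i => if (liftT (z i))^2 ≤ (liftT (z i) - 1)^2 then 0 else -1 with hl0
  have hterm : Real.exp (-(∑ i, (liftT (z i) + (l0 i : ℝ))^2) / (2*ν))
      = Real.exp (-(Dz d z)/(2*ν)) := by
    have hsum : ∑ i, (liftT (z i) + (l0 i : ℝ))^2 = Dz d z := by
      rw [Dz]
      apply Finset.sum_congr rfl
      intro i _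
      by_cases h : (liftT (z i))^2 ≤ (liftT (z i) - 1)^2
      · rw [min_eq_left h]
        simp [hl0, h]
      · rw [min_eq_right (le_of_lt (lt_of_not_ge h))]
        simp only [hl0, if_neg h]
        push_cast
        ring
    rw [hsum]
  rw [← hterm]
  exact Summable.le_tsum (summable_term hν hν' z) l0 fun l _ => (Real.exp_pos _).le

lemma heatKernel_pos {d : ℕ} {ν : ℝ} (hν : 0 < ν) (hν' : ν ≤ 3/8) (z : Torus d) :
    0 < heatKernel d ν z := by
  rw [heatKernel]
  have hbase : 0 < 2*π*ν := by
    have := Real.pi_pos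
    nlinarith
  exact mul_pos (Real.rpow_pos_of_pos hbase _)
    (lt_of_lt_of_le (Real.exp_pos _) (tsum_lower hν hν' z))

lemma abs_nu_log_heatKernel {d : ℕ} {ν : ℝ} (hν : 0 < ν) (hν' : ν ≤ 3/8) (z : Torus d) :
    |ν * Real.log (heatKernel d ν z) + (∑ i, ‖z i‖^2)/2|
      ≤ ((d:ℝ)/2) * |ν * Real.log (2*π*ν)| + ν * Real.log (Cd d) := by
  have hbase : 0 < 2*π*ν := by
    have := Real.pi_pos
    nlinarith
  set S := ∑' l : Fin d → ℤ, Real.exp (-(∑ i, (liftT (z i) + (l i : ℝ))^2) / (2*ν)) with hS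
  have hSpos : 0 < S := lt_of_lt_of_le (Real.exp_pos _) (tsum_lower hν hν' z)
  have hlog : Real.log (heatKernel d ν z) = (-(d:ℝ)/2) * Real.log (2*π*ν) + Real.log S := by
    rw [heatKernel, Real.log_mul (ne_of_gt (Real.rpow_pos_of_pos hbase _)) (ne_of_gt hSpos),
      Real.log_rpow hbase]
  have hlow : -(Dz d z)/(2*ν) ≤ Real.log S := by
    rw [Real.le_log_iff_exp_le hSpos]
    exact tsum_lower hν hν' z
  have hup : Real.log S ≤ Real.log (Cd d) + -(Dz d z)/(2*ν) := by
    have h1 : Real.log S ≤ Real.log (Real.exp (-(Dz d z)/(2*ν)) * Cd d) :=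
      (Real.log_le_log_iff hSpos (mul_pos (Real.exp_pos _)
        (lt_of_lt_of_le one_pos (one_le_Cd d)))).mpr (tsum_upper hν hν' z)
    rwa [Real.log_mul (Real.exp_pos _).ne' (by linarith [one_le_Cd d]), Real.log_exp,
      add_comm] at h1
  have hDeq : Dz d z = ∑ i, ‖z i‖^2 := Dz_eq_sum_norm d z
  have e1 : ν * (-(Dz d z)/(2*ν)) = -(Dz d z)/2 := by
    field_simp
  have hB1 : 0 ≤ ν * Real.log S + (Dz d z)/2 := by
    have := mul_le_mul_of_nonneg_left hlow hν.le
    rw [e1] at this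
    linarith
  have hB2 : ν * Real.log S + (Dz d z)/2 ≤ ν * Real.log (Cd d) := by
    have := mul_le_mul_of_nonneg_left hup hν.le
    rw [mul_add, e1] at this
    linarith
  have hA : ν * Real.log (heatKernel d ν z) + (∑ i, ‖z i‖^2)/2
      = (-(d:ℝ)/2) * (ν * Real.log (2*π*ν)) + (ν * Real.log S + (Dz d z)/2) := by
    rw [hlog, hDeq]
    ring
  have habs : |(-(d:ℝ)/2) * (ν * Real.log (2*π*ν))| = ((d:ℝ)/2) * |ν * Real.log (2*π*ν)| := by
    rw [abs_mul]
    congr 1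
    rw [abs_div, abs_neg, abs_of_nonneg (by positivity : (0:ℝ) ≤ (d:ℝ))]
    norm_num
  have h1 := le_abs_self ((-(d:ℝ)/2) * (ν * Real.log (2*π*ν)))
  have h2 := neg_abs_le ((-(d:ℝ)/2) * (ν * Real.log (2*π*ν)))
  have hνC : 0 ≤ ν * Real.log (Cd d) := mul_nonneg hν.le (log_Cd_nonneg d)
  rw [hA, abs_le]
  constructor
  · rw [← habs] at *
    linarith
  · rw [← habs] at *
    linarith

lemma measurable_heatKernel {d : ℕ} {ν : ℝ} (hν : 0 < ν) (hν' : ν ≤ 3/8) :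
    Measurable (heatKernel d ν) := by
  apply Measurable.const_mul
  have hm : ∀ l : Fin d → ℤ, Measurable fun z : Torus d =>
      Real.exp (-(∑ i, (liftT (z i) + (l i : ℝ))^2) / (2*ν)) := by
    intro l
    apply Measurable.exp
    apply Measurable.div_const
    apply Measurable.neg
    apply Finset.measurable_sum
    intro i _
    exact ((measurable_liftT.comp (measurable_pi_apply i)).add_const _).pow_const 2
  have h1 : (fun z : Torus d =>
      ∑' l : Fin d → ℤ, Real.exp (-(∑ i, (liftT (z i) + (l i : ℝ))^2) / (2*ν)))
      = fun z => (∑' l : Fin d → ℤ,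
        ENNReal.ofReal (Real.exp (-(∑ i, (liftT (z i) + (l i : ℝ))^2) / (2*ν)))).toReal := by
    funext z
    rw [← ENNReal.ofReal_tsum_of_nonneg (fun l => (Real.exp_pos _).le) (summable_term hν hν' z),
      ENNReal.toReal_ofReal (tsum_nonneg fun l => (Real.exp_pos _).le)]
  rw [h1]
  exact (Measurable.ennreal_tsum fun l =>
    ENNReal.measurable_ofReal.comp (hm l)).ennreal_toReal

lemma integrable_log_heat {d : ℕ} {ν : ℝ} (hν : 0 < ν) (hν' : ν ≤ 3/8)
    (γ : Measure (Torus d × Torus d)) [IsProbabilityMeasure γ] :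
    Integrable (fun p : Torus d × Torus d => Real.log (heatKernel d ν (p.2 - p.1))) γ := by
  set K := (((d:ℝ)/2) * |ν * Real.log (2*π*ν)| + ν * Real.log (Cd d) + (d:ℝ)/2)/ν with hK
  apply (integrable_const K).mono'
  · exact (Real.measurable_log.comp ((measurable_heatKernel hν hν').comp
      (measurable_snd.sub measurable_fst))).aestronglyMeasurable
  · filter_upwards with p
    rw [Real.norm_eq_abs]
    set z := p.2 - p.1 with hz
    have hb := abs_nu_log_heatKernel hν hν' z
    have hD0 : 0 ≤ ∑ i, ‖z i‖^2 := by
      rw [← Dz_eq_sum_norm]; exact Dz_nonneg d z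
    have hDle : (∑ i, ‖z i‖^2) ≤ d := by
      rw [← Dz_eq_sum_norm]; exact Dz_le d z
    have h1 : |ν * Real.log (heatKernel d ν z)|
        ≤ ((d:ℝ)/2) * |ν * Real.log (2*π*ν)| + ν * Real.log (Cd d) + (d:ℝ)/2 := by
      have := abs_sub_abs_le_abs_sub (ν * Real.log (heatKernel d ν z) + (∑ i, ‖z i‖^2)/2)
        ((∑ i, ‖z i‖^2)/2)
      have h2 : |(∑ i, ‖z i‖^2)/2| ≤ (d:ℝ)/2 := by
        rw [abs_of_nonneg (by linarith)]
        linarith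
      have h3 : |ν * Real.log (heatKernel d ν z)|
          ≤ |ν * Real.log (heatKernel d ν z) + (∑ i, ‖z i‖^2)/2| + |(∑ i, ‖z i‖^2)/2| := by
        have := abs_add_le (ν * Real.log (heatKernel d ν z) + (∑ i, ‖z i‖^2)/2)
          (-((∑ i, ‖z i‖^2)/2))
        simpa using this
      calc |ν * Real.log (heatKernel d ν z)|
          ≤ |ν * Real.log (heatKernel d ν z) + (∑ i, ‖z i‖^2)/2| + |(∑ i, ‖z i‖^2)/2| := h3
        _ ≤ ((d:ℝ)/2) * |ν * Real.log (2*π*ν)| + ν * Real.log (Cd d) + (d:ℝ)/2 := by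
            linarith
    rw [abs_mul, abs_of_nonneg hν.le] at h1
    rw [hK, le_div_iff₀ hν]
    linarith

lemma distSq_eq {d : ℕ} (p : Torus d × Torus d) :
    distSq p.1 p.2 = ∑ i, ‖(p.2 - p.1) i‖^2 := by
  rw [distSq]
  apply Finset.sum_congr rfl
  intro i _
  rw [dist_eq_norm, Pi.sub_apply, norm_sub_rev]

lemma distSq_nonneg' {d : ℕ} (p : Torus d × Torus d) : 0 ≤ distSq p.1 p.2 := by
  rw [distSq]
  exact Finset.sum_nonneg fun i _ => sq_nonneg _

lemma distSq_le {d : ℕ} (p : Torus d × Torus d) : distSq p.1 p.2 ≤ d := by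
  rw [distSq_eq, ← Dz_eq_sum_norm]
  exact Dz_le d _

lemma measurable_distSq {d : ℕ} : Measurable fun p : Torus d × Torus d => distSq p.1 p.2 := by
  have : Continuous fun p : Torus d × Torus d => distSq p.1 p.2 := by
    apply continuous_finset_sum
    intro i _
    exact (Continuous.dist ((continuous_apply i).comp continuous_fst)
      ((continuous_apply i).comp continuous_snd)).pow 2
  exact this.measurable

lemma integrable_distSq {d : ℕ} (γ : Measure (Torus d × Torus d)) [IsProbabilityMeasure γ] :
    Integrable (fun p : Torus d × Torus d => distSq p.1 p.2) γ := by
  apply (integrable_const ((d:ℝ))).mono' measurable_distSq.aestronglyMeasurable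
  filter_upwards with p
  rw [Real.norm_eq_abs, abs_of_nonneg (distSq_nonneg' p)]
  exact distSq_le p

lemma relEnt_eq {d : ℕ} {ν : ℝ} (hν : 0 < ν) (hν' : ν ≤ 3/8)
    (γ : Measure (Torus d × Torus d)) [IsProbabilityMeasure γ]
    (hac : γ ≪ (volume : Measure (Torus d × Torus d)))
    (hfin : Integrable
      (fun p => Real.log ((γ.rnDeriv (volume : Measure (Torus d × Torus d)) p).toReal)) γ) :
    relEnt γ (Rnu01 d ν)
      = relEnt γ (volume : Measure (Torus d × Torus d))
        - ∫ p, Real.log (heatKernel d ν (p.2 - p.1)) ∂γ := by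
  set f : Torus d × Torus d → ENNReal := fun p => ENNReal.ofReal (heatKernel d ν (p.2 - p.1))
    with hf
  have hτpos : ∀ p : Torus d × Torus d, 0 < heatKernel d ν (p.2 - p.1) :=
    fun p => heatKernel_pos hν hν' _
  have hfm : Measurable f := ENNReal.measurable_ofReal.comp
    ((measurable_heatKernel hν hν').comp (measurable_snd.sub measurable_fst))
  have h0 : ∀ᵐ p ∂(volume : Measure (Torus d × Torus d)), f p ≠ 0 :=
    ae_of_all _ fun p => (ne_of_gt (ENNReal.ofReal_pos.mpr (hτpos p)))
  have htop : ∀ᵐ p ∂(volume : Measure (Torus d × Torus d)), f p ≠ ⊤ :=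
    ae_of_all _ fun p => ENNReal.ofReal_ne_top
  have h1 := Measure.rnDeriv_withDensity_right γ
    (volume : Measure (Torus d × Torus d)) hfm.aemeasurable h0 htop
  have h1γ : γ.rnDeriv (Rnu01 d ν) =ᵐ[γ] fun p => (f p)⁻¹ * γ.rnDeriv volume p :=
    hac.ae_eq h1
  have hpos := Measure.rnDeriv_pos hac
  have hlt : ∀ᵐ p ∂γ, γ.rnDeriv (volume : Measure (Torus d × Torus d)) p < ⊤ :=
    hac.ae_le (Measure.rnDeriv_lt_top γ volume)
  have hlogeq : (fun p => Real.log ((γ.rnDeriv (Rnu01 d ν) p).toReal)) =ᵐ[γ]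
      fun p => Real.log ((γ.rnDeriv (volume : Measure (Torus d × Torus d)) p).toReal)
        - Real.log (heatKernel d ν (p.2 - p.1)) := by
    filter_upwards [h1γ, hpos, hlt] with p h1p hpp hltp
    rw [h1p]
    have htne : ((γ.rnDeriv (volume : Measure (Torus d × Torus d)) p).toReal) ≠ 0 :=
      (ENNReal.toReal_pos hpp.ne' hltp.ne).ne'
    rw [ENNReal.toReal_mul, ENNReal.toReal_inv, ENNReal.toReal_ofReal (hτpos p).le]
    rw [Real.log_mul (inv_ne_zero (hτpos p).ne') htne, Real.log_inv]
    ring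
  rw [relEnt, relEnt, integral_congr_ae hlogeq,
    integral_sub hfin (integrable_log_heat hν hν' γ)]

/-- If `γ ∈ 𝒫(𝕋^d × 𝕋^d)` has finite relative entropy with respect to `Leb ⊗ Leb`,
then `ν·H(γ | R^ν_{0,1}) → (1/2)∫ dist(x,y)² dγ(x,y)` as `ν → 0⁺`. -/
theorem nu_mul_relEnt_tendsto (d : ℕ) (γ : Measure (Torus d × Torus d))
    [IsProbabilityMeasure γ]
    (hac : γ ≪ (volume : Measure (Torus d × Torus d)))
    (hfin : Integrable
      (fun p => Real.log ((γ.rnDeriv (volume : Measure (Torus d × Torus d)) p).toReal)) γ) :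
    Tendsto (fun ν : ℝ => ν * relEnt γ (Rnu01 d ν)) (nhdsWithin 0 (Set.Ioi 0))
      (nhds ((1/2) * ∫ p, distSq p.1 p.2 ∂γ)) := by
  set H := relEnt γ (volume : Measure (Torus d × Torus d)) with hH
  set L := (1/2) * ∫ p, distSq p.1 p.2 ∂γ with hL
  rw [← tendsto_sub_nhds_zero_iff]
  apply squeeze_zero_norm' (a := fun ν : ℝ =>
    ν * |H| + (((d:ℝ)/2) * |ν * Real.log (2*π*ν)| + ν * Real.log (Cd d)))
  · have h38 : ∀ᶠ ν : ℝ in nhdsWithin 0 (Set.Ioi 0), ν ≤ 3/8 := by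
      have : ∀ᶠ ν : ℝ in nhds 0, ν < 3/8 := eventually_lt_nhds (by norm_num)
      exact (this.filter_mono nhdsWithin_le_nhds).mono fun ν h => h.le
    filter_upwards [self_mem_nhdsWithin, h38] with ν hν0 hν'
    have hν : (0:ℝ) < ν := hν0
    -- key identity
    have hrel := relEnt_eq hν hν' γ hac hfin
    have hint1 : Integrable (fun p : Torus d × Torus d =>
        ν * Real.log (heatKernel d ν (p.2 - p.1))) γ :=
      (integrable_log_heat hν hν' γ).const_mul ν
    have hint2 : Integrable (fun p : Torus d × Torus d => distSq p.1 p.2 / 2) γ :=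
      (integrable_distSq γ).div_const 2
    have hsplit : ∫ p, (ν * Real.log (heatKernel d ν (p.2 - p.1)) + distSq p.1 p.2 / 2) ∂γ
        = ν * ∫ p, Real.log (heatKernel d ν (p.2 - p.1)) ∂γ + L := by
      rw [integral_add hint1 hint2, integral_const_mul, hL, integral_div]
      ring
    have hFL : ν * relEnt γ (Rnu01 d ν) - L
        = ν * H - ∫ p, (ν * Real.log (heatKernel d ν (p.2 - p.1)) + distSq p.1 p.2 / 2) ∂γ := by
      rw [hrel, hsplit]
      ring
    rw [hFL]
    have hbound : ‖∫ p, (ν * Real.log (heatKernel d ν (p.2 - p.1)) + distSq p.1 p.2 / 2) ∂γ‖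
        ≤ ((d:ℝ)/2) * |ν * Real.log (2*π*ν)| + ν * Real.log (Cd d) := by
      have h := norm_integral_le_of_norm_le_const (μ := γ)
        (C := ((d:ℝ)/2) * |ν * Real.log (2*π*ν)| + ν * Real.log (Cd d))
        (f := fun p : Torus d × Torus d =>
          ν * Real.log (heatKernel d ν (p.2 - p.1)) + distSq p.1 p.2 / 2) ?_
      · simpa using h
      · filter_upwards with p
        rw [Real.norm_eq_abs]
        have := abs_nu_log_heatKernel hν hν' (p.2 - p.1)
        rwa [← distSq_eq p] at this
    calc ‖ν * H - ∫ p, (ν * Real.log (heatKernel d ν (p.2 - p.1)) + distSq p.1 p.2 / 2) ∂γ‖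
        ≤ ‖ν * H‖ + ‖∫ p, (ν * Real.log (heatKernel d ν (p.2 - p.1)) + distSq p.1 p.2 / 2) ∂γ‖ :=
          norm_sub_le _ _
      _ ≤ ν * |H| + (((d:ℝ)/2) * |ν * Real.log (2*π*ν)| + ν * Real.log (Cd d)) := by
          apply add_le_add _ hbound
          rw [Real.norm_eq_abs, abs_mul, abs_of_nonneg hν.le]
  · have t1 : Tendsto (fun ν : ℝ => ν * |H|) (nhdsWithin 0 (Set.Ioi 0)) (nhds 0) := by
      have : Tendsto (fun ν : ℝ => ν * |H|) (nhds 0) (nhds (0 * |H|)) :=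
        (continuous_id.mul continuous_const).tendsto 0
      simpa using this.mono_left nhdsWithin_le_nhds
    have t3 : Tendsto (fun ν : ℝ => ν * Real.log (Cd d)) (nhdsWithin 0 (Set.Ioi 0)) (nhds 0) := by
      have : Tendsto (fun ν : ℝ => ν * Real.log (Cd d)) (nhds 0) (nhds (0 * Real.log (Cd d))) :=
        (continuous_id.mul continuous_const).tendsto 0
      simpa using this.mono_left nhdsWithin_le_nhds
    have t2 : Tendsto (fun ν : ℝ => ν * Real.log (2*π*ν)) (nhdsWithin 0 (Set.Ioi 0)) (nhds 0) := by
      have t2a : Tendsto (fun ν : ℝ => ν * Real.log (2*π)) (nhdsWithin 0 (Set.Ioi 0)) (nhds 0) := by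
        have : Tendsto (fun ν : ℝ => ν * Real.log (2*π)) (nhds 0) (nhds (0 * Real.log (2*π))) :=
          (continuous_id.mul continuous_const).tendsto 0
        simpa using this.mono_left nhdsWithin_le_nhds
      have t2b : Tendsto (fun ν : ℝ => Real.log ν * ν) (nhdsWithin 0 (Set.Ioi 0)) (nhds 0) := by
        have := tendsto_log_mul_rpow_nhdsGT_zero one_pos
        refine this.congr' ?_
        filter_upwards [self_mem_nhdsWithin] with ν hν
        rw [Real.rpow_one]
      have hsum := t2a.add t2b
      rw [add_zero] at hsum
      refine hsum.congr' ?_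
      filter_upwards [self_mem_nhdsWithin] with ν hν
      have hν0 : (ν:ℝ) ≠ 0 := ne_of_gt hν
      have h2π : (2*π:ℝ) ≠ 0 := by
        have := Real.pi_pos
        positivity
      rw [Real.log_mul h2π hν0]
      ring
    have := t1.add (((t2.abs.const_mul ((d:ℝ)/2)).add t3))
    simp only [abs_zero, mul_zero, add_zero, zero_add] at this
    exact this

end
end

section
/- Let 𝒳, 𝒴 be Polish spaces, r a finite positive Radon measure and p a probability measure on 𝒳 with p ≪ r, and Φ : 𝒳 → 𝒴 measurable. Suppose there exists measurable Ψ : 𝒴 → 𝒳 with Ψ∘Φ = Id r-almost surely. Then H(p | r) = H(Φ#p | Φ#r). -/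
open MeasureTheory

noncomputable section

lemma rnDeriv_map_comp_aux
    {X Y : Type*} [MeasurableSpace X] [MeasurableSpace Y]
    (r : Measure X) [IsFiniteMeasure r] (p : Measure X) [IsProbabilityMeasure p]
    (hpr : p ≪ r)
    (Φ : X → Y) (hΦ : Measurable Φ) (Ψ : Y → X) (hΨ : Measurable Ψ)
    (hinv : ∀ᵐ x ∂r, Ψ (Φ x) = x) :
    (fun x ↦ (p.map Φ).rnDeriv (r.map Φ) (Φ x)) =ᵐ[r] p.rnDeriv r := by
  have hmapr : IsFiniteMeasure (r.map Φ) := inferInstance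
  have hmapac : p.map Φ ≪ r.map Φ := hpr.map hΦ
  refine ae_eq_of_forall_setLIntegral_eq_of_sigmaFinite ?_ ?_ (fun s hs _ ↦ ?_)
  · exact (Measure.measurable_rnDeriv _ _).comp hΦ
  · exact Measure.measurable_rnDeriv _ _
  have hseq : s =ᵐ[r] Φ ⁻¹' (Ψ ⁻¹' s) := by
    filter_upwards [hinv] with x hx
    show (x ∈ s) = (x ∈ Φ ⁻¹' (Ψ ⁻¹' s))
    simp [Set.mem_preimage, hx]
  rw [setLIntegral_congr hseq,
    ← setLIntegral_map (hΨ hs) (Measure.measurable_rnDeriv _ _) hΦ,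
    Measure.setLIntegral_rnDeriv hmapac, Measure.setLIntegral_rnDeriv hpr,
    Measure.map_apply hΦ (hΨ hs)]
  exact (measure_congr (hpr.ae_eq hseq)).symm

/-- Invariance of relative entropy under an `r`-almost-surely injective measurable map:
if `p ≪ r` and `Ψ ∘ Φ = Id` `r`-almost surely, then `H(p | r) = H(Φ#p | Φ#r)`. -/
theorem relEnt_map_of_ae_rightInverse
    {X Y : Type*} [MeasurableSpace X] [TopologicalSpace X] [PolishSpace X] [BorelSpace X]
    [MeasurableSpace Y] [TopologicalSpace Y] [PolishSpace Y] [BorelSpace Y]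
    (r : Measure X) [IsFiniteMeasure r] (p : Measure X) [IsProbabilityMeasure p]
    (hpr : p ≪ r)
    (Φ : X → Y) (hΦ : Measurable Φ) (Ψ : Y → X) (hΨ : Measurable Ψ)
    (hinv : ∀ᵐ x ∂r, Ψ (Φ x) = x) :
    relEnt p r = relEnt (p.map Φ) (r.map Φ) := by
  unfold relEnt
  rw [integral_map hΦ.aemeasurable]
  · refine integral_congr_ae ?_
    filter_upwards [hpr.ae_le (rnDeriv_map_comp_aux r p hpr Φ hΦ Ψ hΨ hinv)] with x hx
    rw [hx]
  · exact (Measurable.comp Real.measurable_log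
      (Measure.measurable_rnDeriv _ _).ennreal_toReal).aestronglyMeasurable

end
end
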